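/- Let N ≥ 1, g ≥ 1, A ⊂ ℤ a g-difference set for [N], and f the step function f(x) = √(N/g)·𝟙[x ∈ ∪_{a∈A} [a/N,(a+1)/N)]. Then for every j ∈ {0,...,N-1} and x ∈ [j/N,(j+1)/N], the autocorrelation satisfies (f⋆f)(x) = (N/g)·[Σ_i χ_A(i)χ_A(i+j)·((j+1)/N - x) + Σ_i χ_A(i)χ_A(i+j+1)·(x - j/N)], where χ_A is the indicator of A; in particular (f⋆f)(j/N) = r_A(j)/g. -/

import Mathlib

open MeasureTheory

section aux

variable {N : ℕ}

/-- uniqueness of the interval containing a point -/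
lemma aux_unique (hN : 1 ≤ N) {a b : ℤ} {t : ℝ}
    (ha : t ∈ Set.Ico ((a : ℝ) / N) (((a : ℝ) + 1) / N))
    (hb : t ∈ Set.Ico ((b : ℝ) / N) (((b : ℝ) + 1) / N)) : a = b := by
  have hN0 : (0 : ℝ) < N := by exact_mod_cast hN
  have h1 : (a : ℝ) / N < ((b : ℝ) + 1) / N := lt_of_le_of_lt ha.1 hb.2
  have h2 : (b : ℝ) / N < ((a : ℝ) + 1) / N := lt_of_le_of_lt hb.1 ha.2
  rw [div_lt_div_iff_of_pos_right hN0] at h1 h2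
  have h1' : a < b + 1 := by exact_mod_cast h1
  have h2' : b < a + 1 := by exact_mod_cast h2
  omega

lemma aux_indicator_union (hN : 1 ≤ N) (A : Finset ℤ) (c : ℝ) (t : ℝ) :
    Set.indicator (⋃ a ∈ A, Set.Ico ((a : ℝ) / N) (((a : ℝ) + 1) / N)) (fun _ => c) t
      = ∑ a ∈ A, Set.indicator (Set.Ico ((a : ℝ) / N) (((a : ℝ) + 1) / N)) (fun _ => c) t := by
  by_cases h : ∃ a ∈ A, t ∈ Set.Ico ((a : ℝ) / N) (((a : ℝ) + 1) / N)
  · obtain ⟨a, haA, hta⟩ := h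
    rw [Set.indicator_of_mem (by exact Set.mem_biUnion haA hta)]
    rw [Finset.sum_eq_single_of_mem a haA]
    · rw [Set.indicator_of_mem hta]
    · intro b hbA hba
      apply Set.indicator_of_notMem
      intro htb
      exact hba (aux_unique hN htb hta)
  · push_neg at h
    have hnot : t ∉ ⋃ a ∈ A, Set.Ico ((a : ℝ) / N) (((a : ℝ) + 1) / N) := by
      intro hmem
      obtain ⟨a, haA, hta⟩ := Set.mem_iUnion₂.1 hmem
      exact h a haA hta
    rw [Set.indicator_of_notMem hnot]
    rw [Finset.sum_congr rfl (fun b hb => Set.indicator_of_notMem (h b hb) _),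
      Finset.sum_const, smul_zero]

/-- the per-pair overlap length -/
lemma aux_overlap (hN : 1 ≤ N) (j : ℕ) (a b : ℤ) {x : ℝ}
    (hx1 : (j : ℝ) / N ≤ x) (hx2 : x ≤ ((j : ℝ) + 1) / N) :
    (ENNReal.ofReal (min (((a : ℝ) + 1) / N) ((((b : ℝ)) + 1) / N - x)
      - max ((a : ℝ) / N) ((b : ℝ) / N - x))).toReal
    = if b - a = (j : ℤ) then ((j : ℝ) + 1) / N - x
      else if b - a = (j : ℤ) + 1 then x - (j : ℝ) / N else 0 := by
  have hN0 : (0 : ℝ) < N := by exact_mod_cast hN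
  have hj1 : ((j : ℝ) + 1) / N = (j : ℝ) / N + 1 / N := by ring
  by_cases h1 : b - a = (j : ℤ)
  · have hb : (b : ℝ) = (a : ℝ) + (j : ℝ) := by exact_mod_cast (show b = a + (j : ℤ) by omega)
    rw [if_pos h1]
    have hbN : (b : ℝ) / N = (a : ℝ) / N + (j : ℝ) / N := by rw [hb]; ring
    have hbN1 : ((b : ℝ) + 1) / N = ((a : ℝ) + 1) / N + (j : ℝ) / N := by rw [hb]; ring
    have e1 : max ((a : ℝ) / N) ((b : ℝ) / N - x) = (a : ℝ) / N :=
      max_eq_left (by linarith)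
    have e2 : min (((a : ℝ) + 1) / N) (((b : ℝ) + 1) / N - x) = ((b : ℝ) + 1) / N - x :=
      min_eq_right (by linarith)
    have harith : ((b : ℝ) + 1) / N - x - (a : ℝ) / N = ((j : ℝ) + 1) / N - x := by
      rw [hb]; ring
    rw [e1, e2, harith, ENNReal.toReal_ofReal (by linarith)]
  · by_cases h2 : b - a = (j : ℤ) + 1
    · have hb : (b : ℝ) = (a : ℝ) + (j : ℝ) + 1 := by
        exact_mod_cast (show b = a + (j : ℤ) + 1 by omega)
      rw [if_neg h1, if_pos h2]
      have hbN : (b : ℝ) / N = (a : ℝ) / N + ((j : ℝ) + 1) / N := by rw [hb]; ring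
      have hbN1 : ((b : ℝ) + 1) / N = ((a : ℝ) + 1) / N + ((j : ℝ) + 1) / N := by
        rw [hb]; ring
      have e1 : max ((a : ℝ) / N) ((b : ℝ) / N - x) = (b : ℝ) / N - x :=
        max_eq_right (by linarith)
      have e2 : min (((a : ℝ) + 1) / N) (((b : ℝ) + 1) / N - x) = ((a : ℝ) + 1) / N :=
        min_eq_left (by linarith)
      have harith : ((a : ℝ) + 1) / N - ((b : ℝ) / N - x) = x - (j : ℝ) / N := by
        rw [hb]; ring
      rw [e1, e2, harith, ENNReal.toReal_ofReal (by linarith)]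
    · rw [if_neg h1, if_neg h2]
      have hle : min (((a : ℝ) + 1) / N) (((b : ℝ) + 1) / N - x)
          - max ((a : ℝ) / N) ((b : ℝ) / N - x) ≤ 0 := by
        rcases lt_or_gt_of_ne (show b - a ≠ (j : ℤ) from h1) with hlt | hgt
        · have hb : (b : ℝ) + 1 ≤ (a : ℝ) + (j : ℝ) := by
            exact_mod_cast (show b + 1 ≤ a + (j : ℤ) by omega)
          have c1 : min (((a : ℝ) + 1) / N) (((b : ℝ) + 1) / N - x)
              ≤ ((b : ℝ) + 1) / N - x := min_le_right _ _
          have c2 : (a : ℝ) / N ≤ max ((a : ℝ) / N) ((b : ℝ) / N - x) := le_max_left _ _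
          have hdiv : ((b : ℝ) + 1) / N ≤ ((a : ℝ) + (j : ℝ)) / N := by gcongr
          have heq : ((a : ℝ) + (j : ℝ)) / N = (a : ℝ) / N + (j : ℝ) / N := by ring
          linarith
        · have hb : (a : ℝ) + (j : ℝ) + 2 ≤ (b : ℝ) := by
            exact_mod_cast (show a + (j : ℤ) + 2 ≤ b by omega)
          have c1 : min (((a : ℝ) + 1) / N) (((b : ℝ) + 1) / N - x)
              ≤ ((a : ℝ) + 1) / N := min_le_left _ _
          have c2 : (b : ℝ) / N - x ≤ max ((a : ℝ) / N) ((b : ℝ) / N - x) := le_max_right _ _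
          have hdiv : ((a : ℝ) + (j : ℝ) + 2) / N ≤ (b : ℝ) / N := by gcongr
          have heq : ((a : ℝ) + (j : ℝ) + 2) / N
              = ((a : ℝ) + 1) / N + ((j : ℝ) + 1) / N := by ring
          linarith
      rw [ENNReal.ofReal_eq_zero.2 hle, ENNReal.toReal_zero]

lemma aux_card_swap (A : Finset ℤ) (m : ℤ) :
    ((A ×ˢ A).filter (fun p => p.2 - p.1 = m)).card
      = ((A ×ˢ A).filter (fun p => p.1 - p.2 = m)).card := by
  apply Finset.card_nbij' Prod.swap Prod.swap
  · intro p hp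
    simp only [Finset.mem_coe, Finset.mem_filter, Finset.mem_product] at hp ⊢
    exact ⟨⟨hp.1.2, hp.1.1⟩, hp.2⟩
  · intro p hp
    simp only [Finset.mem_coe, Finset.mem_filter, Finset.mem_product] at hp ⊢
    exact ⟨⟨hp.1.2, hp.1.1⟩, hp.2⟩
  · intro p _; simp
  · intro p _; simp

end aux

/-- Exact piecewise-affine formula for the autocorrelation of the step function
associated to a `g`-difference set `A` for `[N]`: for `j ∈ {0,…,N-1}` and
`x ∈ [j/N, (j+1)/N]`,
`(f⋆f)(x) = (N/g)·(r_A(j)·((j+1)/N - x) + r_A(j+1)·(x - j/N))`;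
in particular `(f⋆f)(j/N) = r_A(j)/g`. -/
theorem stmt19 (g N : ℕ) (hg : 1 ≤ g) (hN : 1 ≤ N) (A : Finset ℤ)
    (hA : ∀ m : ℤ, 1 ≤ m → m ≤ (N : ℤ) →
      g ≤ ((A ×ˢ A).filter (fun p => p.1 - p.2 = m)).card)
    (f : ℝ → ℝ)
    (hf : f = Set.indicator (⋃ a ∈ A, Set.Ico ((a : ℝ) / N) (((a : ℝ) + 1) / N))
      (fun _ => Real.sqrt ((N : ℝ) / g)))
    (r : ℤ → ℕ)
    (hr : ∀ m : ℤ, r m = ((A ×ˢ A).filter (fun p => p.1 - p.2 = m)).card) :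
    ∀ j : ℕ, j < N → ∀ x ∈ Set.Icc ((j : ℝ) / N) (((j : ℝ) + 1) / N),
      ((∫ t, f t * f (x + t)) =
        ((N : ℝ) / g) * ((r j) * (((j : ℝ) + 1) / N - x) + (r (j + 1)) * (x - (j : ℝ) / N))) ∧
      (∫ t, f t * f ((j : ℝ) / N + t)) = (r j : ℝ) / g := by
  have hN0 : (0 : ℝ) < N := by exact_mod_cast hN
  have hg0 : (0 : ℝ) < g := by exact_mod_cast hg
  have hc : Real.sqrt ((N : ℝ) / g) * Real.sqrt ((N : ℝ) / g) = (N : ℝ) / g :=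
    Real.mul_self_sqrt (by positivity)
  -- main computation for any x in the interval
  have main : ∀ j : ℕ, ∀ x : ℝ, (j : ℝ) / N ≤ x → x ≤ ((j : ℝ) + 1) / N →
      (∫ t, f t * f (x + t)) =
        ((N : ℝ) / g) * ((r j) * (((j : ℝ) + 1) / N - x) + (r (j + 1)) * (x - (j : ℝ) / N)) := by
    intro j x hx1 hx2
    -- pointwise decomposition
    have hpt : ∀ t : ℝ, f t * f (x + t)
        = ∑ p ∈ A ×ˢ A, Set.indicator
            (Set.Ico (max ((p.1 : ℝ) / N) ((p.2 : ℝ) / N - x))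
              (min (((p.1 : ℝ) + 1) / N) (((p.2 : ℝ) + 1) / N - x)))
            (fun _ => (N : ℝ) / g) t := by
      intro t
      rw [hf, aux_indicator_union hN, aux_indicator_union hN, Finset.sum_mul_sum,
        ← Finset.sum_product']
      apply Finset.sum_congr rfl
      intro p _
      have hshift : Set.indicator (Set.Ico ((p.2 : ℝ) / N) (((p.2 : ℝ) + 1) / N))
          (fun _ => Real.sqrt ((N : ℝ) / g)) (x + t)
          = Set.indicator (Set.Ico ((p.2 : ℝ) / N - x) (((p.2 : ℝ) + 1) / N - x))
            (fun _ => Real.sqrt ((N : ℝ) / g)) t := by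
        rw [Set.indicator_apply, Set.indicator_apply]
        congr 1
        simp only [Set.mem_Ico, eq_iff_iff]
        constructor <;> (intro h; constructor <;> linarith [h.1, h.2])
      rw [hshift, ← Set.inter_indicator_mul, Set.Ico_inter_Ico]
      simp only [hc]
    -- integrate
    have hint : ∀ p : ℤ × ℤ, Integrable (fun t => Set.indicator
        (Set.Ico (max ((p.1 : ℝ) / N) ((p.2 : ℝ) / N - x))
          (min (((p.1 : ℝ) + 1) / N) (((p.2 : ℝ) + 1) / N - x)))
        (fun _ => (N : ℝ) / g) t) := by
      intro p
      rw [integrable_indicator_iff measurableSet_Ico]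
      exact integrableOn_const measure_Ico_lt_top.ne
    calc (∫ t, f t * f (x + t))
        = ∫ t, ∑ p ∈ A ×ˢ A, Set.indicator
            (Set.Ico (max ((p.1 : ℝ) / N) ((p.2 : ℝ) / N - x))
              (min (((p.1 : ℝ) + 1) / N) (((p.2 : ℝ) + 1) / N - x)))
            (fun _ => (N : ℝ) / g) t := by
          exact congrArg _ (funext hpt)
      _ = ∑ p ∈ A ×ˢ A, ∫ t, Set.indicator
            (Set.Ico (max ((p.1 : ℝ) / N) ((p.2 : ℝ) / N - x))
              (min (((p.1 : ℝ) + 1) / N) (((p.2 : ℝ) + 1) / N - x)))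
            (fun _ => (N : ℝ) / g) t := by
          exact integral_finset_sum _ (fun p _ => hint p)
      _ = ∑ p ∈ A ×ˢ A, (volume (Set.Ico (max ((p.1 : ℝ) / N) ((p.2 : ℝ) / N - x))
            (min (((p.1 : ℝ) + 1) / N) (((p.2 : ℝ) + 1) / N - x)))).toReal • ((N : ℝ) / g) := by
          exact Finset.sum_congr rfl fun p _ => integral_indicator_const _ measurableSet_Ico
      _ = ∑ p ∈ A ×ˢ A, (if p.2 - p.1 = (j : ℤ) then ((j : ℝ) + 1) / N - x
            else if p.2 - p.1 = (j : ℤ) + 1 then x - (j : ℝ) / N else 0) * ((N : ℝ) / g) := by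
          apply Finset.sum_congr rfl
          intro p _
          rw [Real.volume_Ico, smul_eq_mul, aux_overlap hN j p.1 p.2 hx1 hx2]
      _ = ((N : ℝ) / g) * ((r j) * (((j : ℝ) + 1) / N - x)
            + (r (j + 1)) * (x - (j : ℝ) / N)) := by
          rw [← Finset.sum_mul]
          have hsplit : ∀ p : ℤ × ℤ,
              (if p.2 - p.1 = (j : ℤ) then ((j : ℝ) + 1) / N - x
                else if p.2 - p.1 = (j : ℤ) + 1 then x - (j : ℝ) / N else 0)
              = (if p.2 - p.1 = (j : ℤ) then ((j : ℝ) + 1) / N - x else 0)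
                + (if p.2 - p.1 = (j : ℤ) + 1 then x - (j : ℝ) / N else 0) := by
            intro p
            by_cases h1 : p.2 - p.1 = (j : ℤ)
            · rw [if_pos h1, if_pos h1, if_neg (by omega), add_zero]
            · rw [if_neg h1, if_neg h1, zero_add]
          rw [Finset.sum_congr rfl (fun p _ => hsplit p), Finset.sum_add_distrib,
            ← Finset.sum_filter, ← Finset.sum_filter, Finset.sum_const, Finset.sum_const,
            aux_card_swap, aux_card_swap, ← hr, ← hr]
          push_cast
          ring
  intro j hj x hx
  refine ⟨main j x hx.1 hx.2, ?_⟩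
  have h2 := main j ((j : ℝ) / N) le_rfl ((div_le_div_iff_of_pos_right hN0).2 (by linarith))
  rw [h2]
  have : ((j : ℝ) + 1) / N - (j : ℝ) / N = 1 / N := by ring
  rw [this]
  field_simp
  ring
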